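/- Let f_1,…,f_k be monic real polynomials all of the same degree n. Then f_1,…,f_k have a common interlacing if and only if every convex combination Σ λ_i f_i (with λ_i ≥ 0, Σ λ_i = 1) is real-rooted. -/

import Mathlib

open scoped Classical
open Polynomial

/-- A real polynomial is real-rooted if it has a full set of real roots
(counted with multiplicity). -/
def RealRooted (f : Polynomial ℝ) : Prop := Multiset.card f.roots = f.natDegree

/-- The roots of a real polynomial, sorted in increasing order. -/
noncomputable def sortedRoots (f : Polynomial ℝ) : List ℝ := f.roots.sort (· ≤ ·)

/-- `g` interlaces `f`: both are real-rooted, `deg g = deg f - 1`, and the sorted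
roots satisfy `β₁ ≤ α₁ ≤ β₂ ≤ ⋯ ≤ α_{n-1} ≤ β_n`. -/
def Interlaces (g f : Polynomial ℝ) : Prop :=
  RealRooted f ∧ RealRooted g ∧ g.natDegree + 1 = f.natDegree ∧
  ∀ k, k < g.natDegree →
    (sortedRoots f).getD k 0 ≤ (sortedRoots g).getD k 0 ∧
    (sortedRoots g).getD k 0 ≤ (sortedRoots f).getD (k + 1) 0

/-- The largest real root of a polynomial. -/
noncomputable def maxRoot (f : Polynomial ℝ) : ℝ := sSup {x : ℝ | f.IsRoot x}

/- ## Basic lemmas -/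

lemma realRooted_iff_splits (p : Polynomial ℝ) :
    RealRooted p ↔ p.Splits := by
  rw [RealRooted, splits_iff_card_roots]

@[simp] lemma coe_sortedRoots (p : Polynomial ℝ) : (↑(sortedRoots p) : Multiset ℝ) = p.roots :=
  Multiset.sort_eq _ _

lemma sortedRoots_sorted (p : Polynomial ℝ) : (sortedRoots p).Pairwise (· ≤ ·) :=
  Multiset.pairwise_sort _ _

lemma sortedRoots_length (p : Polynomial ℝ) (h : RealRooted p) :
    (sortedRoots p).length = p.natDegree := by
  rw [← h, sortedRoots, Multiset.length_sort]

lemma eq_prod_sortedRoots {p : Polynomial ℝ} (hm : p.Monic) (hr : RealRooted p) :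
    p = (((sortedRoots p)).map (fun a => X - C a)).prod := by
  have := (prod_multiset_X_sub_C_of_monic_of_roots_card_eq hm hr).symm
  conv_lhs => rw [this]
  rw [← coe_sortedRoots p, Multiset.map_coe, Multiset.prod_coe]

/- ## Products over root vectors -/

noncomputable def prodX {n : ℕ} (r : Fin n → ℝ) : Polynomial ℝ := ∏ i, (X - C (r i))

lemma prodX_eq_multiset {n : ℕ} (r : Fin n → ℝ) :
    prodX r = ((Multiset.map (fun a => X - C a) ↑(List.ofFn r))).prod := by
  rw [prodX, Finset.prod_eq_multiset_prod, ← Fin.univ_val_map, Multiset.map_map]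
  rfl

lemma prodX_monic {n : ℕ} (r : Fin n → ℝ) : (prodX r).Monic := by
  apply monic_prod_of_monic
  intro i _
  exact monic_X_sub_C _

lemma prodX_roots {n : ℕ} (r : Fin n → ℝ) : (prodX r).roots = ↑(List.ofFn r) := by
  rw [prodX_eq_multiset, roots_multiset_prod_X_sub_C]

lemma prodX_natDegree {n : ℕ} (r : Fin n → ℝ) : (prodX r).natDegree = n := by
  rw [prodX]
  rw [natDegree_prod_of_monic _ _ (fun i _ => monic_X_sub_C _)]
  simp

lemma prodX_realRooted {n : ℕ} (r : Fin n → ℝ) : RealRooted (prodX r) := by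
  rw [RealRooted, prodX_roots, prodX_natDegree]
  simp

lemma prodX_sortedRoots {n : ℕ} {r : Fin n → ℝ} (hr : Monotone r) :
    sortedRoots (prodX r) = List.ofFn r := by
  apply List.Perm.eq_of_pairwise' (l₂ := List.ofFn r) (sortedRoots_sorted _) ?_ ?_
  · rw [List.pairwise_ofFn]
    intro i j hij
    exact hr hij.le
  · rw [← Multiset.coe_eq_coe, coe_sortedRoots, prodX_roots]

lemma prodX_eval {n : ℕ} (r : Fin n → ℝ) (x : ℝ) :
    (prodX r).eval x = ∏ i, (x - r i) := by
  rw [prodX]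
  simp [eval_prod]

lemma prodX_pos {n : ℕ} (r : Fin n → ℝ) {x : ℝ} (h : ∀ i, r i < x) :
    0 < (prodX r).eval x := by
  rw [prodX_eval]
  exact Finset.prod_pos fun i _ => sub_pos.2 (h i)

lemma prodX_sign_neg {n : ℕ} (r : Fin n → ℝ) {x : ℝ} (h : ∀ i, x < r i) :
    0 < (-1 : ℝ) ^ n * (prodX r).eval x := by
  rw [prodX_eval]
  have : ∀ i : Fin n, (x - r i) = (-1) * (r i - x) := by intro i; ring
  rw [Finset.prod_congr rfl (fun i _ => this i), Finset.prod_mul_distrib]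
  simp only [Finset.prod_const, Finset.card_univ, Fintype.card_fin]
  rw [← mul_assoc, ← mul_pow]
  simp only [neg_mul_neg, one_mul, one_pow]
  exact Finset.prod_pos fun i _ => sub_pos.2 (h i)

/-- getD-based vector of a list of length n. -/
lemma list_eq_ofFn_getD {n : ℕ} {l : List ℝ} (hl : l.length = n) :
    l = List.ofFn (fun i : Fin n => l.getD i 0) := by
  apply List.ext_getElem
  · simp [hl]
  · intro i h1 h2
    simp only [List.getElem_ofFn]
    rw [List.getD_eq_getElem]

/-- The getD-root-vector of a real-rooted polynomial. -/
noncomputable def rootVec (n : ℕ) (p : Polynomial ℝ) : Fin n → ℝ :=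
  fun i => (sortedRoots p).getD i 0

lemma rootVec_monotone {n : ℕ} {p : Polynomial ℝ} (hr : RealRooted p)
    (hd : p.natDegree = n) : Monotone (rootVec n p) := by
  intro i j hij
  rcases eq_or_lt_of_le hij with h | h
  · rw [h]
  have hlen : (sortedRoots p).length = n := by rw [sortedRoots_length p hr, hd]
  have hi : (i : ℕ) < (sortedRoots p).length := by rw [hlen]; exact i.2
  have hj : (j : ℕ) < (sortedRoots p).length := by rw [hlen]; exact j.2
  rw [rootVec, rootVec, List.getD_eq_getElem _ _ hi, List.getD_eq_getElem _ _ hj]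
  exact List.Pairwise.rel_get_of_lt (sortedRoots_sorted p) (by exact_mod_cast h)

lemma eq_prodX_rootVec {n : ℕ} {p : Polynomial ℝ} (hm : p.Monic) (hr : RealRooted p)
    (hd : p.natDegree = n) : p = prodX (rootVec n p) := by
  have hlen : (sortedRoots p).length = n := by rw [sortedRoots_length p hr, hd]
  conv_lhs => rw [eq_prod_sortedRoots hm hr]
  rw [prodX_eq_multiset, Multiset.map_coe, Multiset.prod_coe]
  congr 1
  conv_lhs => rw [list_eq_ofFn_getD hlen]
  rw [List.map_ofFn, List.map_ofFn]
  rfl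

lemma rootVec_mem_roots {n : ℕ} {p : Polynomial ℝ} (hr : RealRooted p)
    (hd : p.natDegree = n) (i : Fin n) : rootVec n p i ∈ p.roots := by
  have hlen : (sortedRoots p).length = n := by rw [sortedRoots_length p hr, hd]
  have hi : (i : ℕ) < (sortedRoots p).length := by rw [hlen]; exact i.2
  rw [← coe_sortedRoots, rootVec, List.getD_eq_getElem _ _ hi]
  exact_mod_cast List.getElem_mem hi

open Filter Topology in
/-- Core compactness lemma: a coefficient/evaluation limit of real-rooted monic
polynomials with uniformly bounded roots is real-rooted, and sorted roots converge. -/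
lemma core_limit {n : ℕ} {M : ℝ} {F : Polynomial ℝ} (hF : F.Monic) (hFd : F.natDegree = n)
    (p : ℕ → Polynomial ℝ)
    (hm : ∀ᶠ m in atTop, (p m).Monic ∧ (p m).natDegree = n ∧ RealRooted (p m) ∧
      ∀ r ∈ (p m).roots, |r| ≤ M)
    (hev : ∀ x : ℝ, Tendsto (fun m => (p m).eval x) atTop (𝓝 (F.eval x))) :
    RealRooted F ∧ Tendsto (fun m => rootVec n (p m)) atTop (𝓝 (rootVec n F)) := by
  classical
  set K : Set (Fin n → ℝ) := Set.univ.pi (fun _ => Set.Icc (-M) M) with hK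
  have hKc : IsCompact K := isCompact_univ_pi fun _ => isCompact_Icc
  set v : ℕ → (Fin n → ℝ) := fun m => rootVec n (p m) with hv
  have hvK : ∀ᶠ m in atTop, v m ∈ K := by
    filter_upwards [hm] with m hm
    intro i _
    have := hm.2.2.2 _ (rootVec_mem_roots hm.2.2.1 hm.2.1 i)
    exact abs_le.1 this
  -- main subsequence claim
  have claim : ∀ ns : ℕ → ℕ, Tendsto ns atTop atTop →
      ∃ ψ : ℕ → ℕ, StrictMono ψ ∧ ∃ r : Fin n → ℝ, Monotone r ∧ prodX r = F ∧
        Tendsto (fun m => v (ns (ψ m))) atTop (𝓝 r) := by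
    intro ns hns
    have hfreq : ∃ᶠ m in atTop, v (ns m) ∈ K := ((hns.eventually hvK)).frequently
    obtain ⟨r, hrK, ψ, hψ, hconv⟩ := hKc.tendsto_subseq' hfreq
    have hcoord : ∀ i, Tendsto (fun m => v (ns (ψ m)) i) atTop (𝓝 (r i)) := by
      intro i
      exact (tendsto_pi_nhds.1 hconv) i
    have hgood : ∀ᶠ m in atTop, (p (ns (ψ m))).Monic ∧ (p (ns (ψ m))).natDegree = n ∧
        RealRooted (p (ns (ψ m))) ∧ ∀ x ∈ (p (ns (ψ m))).roots, |x| ≤ M :=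
      (hns.comp hψ.tendsto_atTop).eventually hm
    have hrmono : Monotone r := by
      intro i j hij
      have : ∀ᶠ m in atTop, v (ns (ψ m)) i ≤ v (ns (ψ m)) j := by
        filter_upwards [hgood] with m hg
        exact rootVec_monotone hg.2.2.1 hg.2.1 hij
      exact le_of_tendsto_of_tendsto (hcoord i) (hcoord j) this
    have hprod : prodX r = F := by
      apply Polynomial.funext
      intro x
      have h1 : Tendsto (fun m => ∏ i, (x - v (ns (ψ m)) i)) atTop
          (𝓝 (∏ i, (x - r i))) := by
        apply tendsto_finset_prod
        intro i _
        exact tendsto_const_nhds.sub (hcoord i)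
      have h2 : Tendsto (fun m => (p (ns (ψ m))).eval x) atTop (𝓝 (F.eval x)) :=
        (hev x).comp (hns.comp hψ.tendsto_atTop)
      have heq : ∀ᶠ m in atTop, (p (ns (ψ m))).eval x = ∏ i, (x - v (ns (ψ m)) i) := by
        filter_upwards [hgood] with m hg
        conv_lhs => rw [eq_prodX_rootVec hg.1 hg.2.2.1 hg.2.1]
        rw [prodX_eval]
      have h2' : Tendsto (fun m => ∏ i, (x - v (ns (ψ m)) i)) atTop (𝓝 (F.eval x)) :=
        h2.congr' heq
      rw [prodX_eval]
      exact tendsto_nhds_unique h1 h2'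
    exact ⟨ψ, hψ, r, hrmono, hprod, hconv⟩
  obtain ⟨ψ0, hψ0, r0, hr0m, hr0p, _⟩ := claim id tendsto_id
  have hFr : RealRooted F := hr0p ▸ prodX_realRooted r0
  have hroot : ∀ (r : Fin n → ℝ), Monotone r → prodX r = F → rootVec n F = r := by
    intro r hrm hrp
    funext i
    rw [rootVec, ← hrp, prodX_sortedRoots hrm]
    simp
  refine ⟨hFr, ?_⟩
  apply tendsto_of_subseq_tendsto
  intro ns hns
  obtain ⟨ψ, hψ, r, hrm, hrp, hconv⟩ := claim ns hns
  exact ⟨ψ, by rwa [hroot r hrm hrp]⟩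

/- ## Convex combinations are monic of degree n -/

lemma combo_coeff {k : ℕ} (lam : Fin k → ℝ) (f : Fin k → Polynomial ℝ) (m : ℕ) :
    (∑ i, lam i • f i).coeff m = ∑ i, lam i * (f i).coeff m := by
  rw [finset_sum_coeff]
  exact Finset.sum_congr rfl fun i _ => by rw [Polynomial.coeff_smul, smul_eq_mul]

lemma combo_monic {n k : ℕ} {lam : Fin k → ℝ} {f : Fin k → Polynomial ℝ}
    (hmonic : ∀ i, (f i).Monic) (hdeg : ∀ i, (f i).natDegree = n)
    (hsum : (∑ i, lam i) = 1) :
    (∑ i, lam i • f i).Monic ∧ (∑ i, lam i • f i).natDegree = n := by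
  have hle : (∑ i, lam i • f i).natDegree ≤ n := by
    apply natDegree_sum_le_of_forall_le
    intro i _
    exact le_trans (natDegree_smul_le _ _) (le_of_eq (hdeg i))
  have hcoeff : (∑ i, lam i • f i).coeff n = 1 := by
    rw [combo_coeff]
    rw [← hsum]
    apply Finset.sum_congr rfl
    intro i _
    have : (f i).coeff n = 1 := by
      have := (hmonic i).leadingCoeff
      rwa [leadingCoeff, hdeg i] at this
    rw [this, mul_one]
  have hmon : (∑ i, lam i • f i).Monic :=
    monic_of_natDegree_le_of_coeff_eq_one n hle hcoeff
  refine ⟨hmon, le_antisymm hle ?_⟩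
  apply le_natDegree_of_ne_zero
  rw [hcoeff]; exact one_ne_zero

lemma combo_eval {k : ℕ} (lam : Fin k → ℝ) (f : Fin k → Polynomial ℝ) (x : ℝ) :
    (∑ i, lam i • f i).eval x = ∑ i, lam i * (f i).eval x := by
  rw [eval_finset_sum]
  apply Finset.sum_congr rfl
  intro i _
  rw [Polynomial.smul_eq_C_mul, eval_mul, eval_C]

lemma exists_pos_weight {k : ℕ} {lam : Fin k → ℝ} (hlam : ∀ i, 0 ≤ lam i)
    (hsum : (∑ i, lam i) = 1) : ∃ i, 0 < lam i := by
  by_contra h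
  push_neg at h
  have : (∑ i, lam i) ≤ 0 := Finset.sum_nonpos fun i _ => h i
  rw [hsum] at this; linarith

lemma combo_pos_of_sign {k : ℕ} {lam : Fin k → ℝ} {f : Fin k → Polynomial ℝ}
    (hlam : ∀ i, 0 ≤ lam i) (hsum : (∑ i, lam i) = 1) {e : ℝ} {x : ℝ}
    (hpos : ∀ i, 0 < e * (f i).eval x) :
    0 < e * (∑ i, lam i • f i).eval x := by
  obtain ⟨i₀, hi₀⟩ := exists_pos_weight hlam hsum
  rw [combo_eval, Finset.mul_sum]
  have hterm : ∀ i ∈ Finset.univ, (0:ℝ) ≤ e * (lam i * (f i).eval x) := by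
    intro i _
    have h1 := hpos i
    have : e * (lam i * (f i).eval x) = lam i * (e * (f i).eval x) := by ring
    rw [this]
    exact mul_nonneg (hlam i) (le_of_lt h1)
  have hsingle : e * (lam i₀ * (f i₀).eval x) ≤ ∑ i, e * (lam i * (f i).eval x) :=
    Finset.single_le_sum hterm (Finset.mem_univ i₀)
  have : 0 < e * (lam i₀ * (f i₀).eval x) := by
    have h1 := hpos i₀
    have : e * (lam i₀ * (f i₀).eval x) = lam i₀ * (e * (f i₀).eval x) := by ring
    rw [this]
    exact mul_pos hi₀ h1
  linarith

/-- Roots of a convex combination are bounded by a bound on all the roots. -/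
lemma combo_roots_bound {n k : ℕ} {lam : Fin k → ℝ} {f : Fin k → Polynomial ℝ}
    (hmonic : ∀ i, (f i).Monic) (hdeg : ∀ i, (f i).natDegree = n)
    (hrr : ∀ i, RealRooted (f i))
    (hlam : ∀ i, 0 ≤ lam i) (hsum : (∑ i, lam i) = 1) {B : ℝ}
    (hB : ∀ i, ∀ r ∈ (f i).roots, |r| ≤ B) :
    ∀ r ∈ (∑ i, lam i • f i).roots, |r| ≤ B := by
  intro r hr
  have hne : (∑ i, lam i • f i) ≠ 0 := (combo_monic hmonic hdeg hsum).1.ne_zero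
  have hmem : IsRoot (∑ i, lam i • f i) r := (mem_roots hne).1 hr
  by_contra habs
  push_neg at habs
  have key : ∀ i, ∀ j : Fin n, -B ≤ rootVec n (f i) j ∧ rootVec n (f i) j ≤ B := by
    intro i j
    exact abs_le.1 (hB i _ (rootVec_mem_roots (hrr i) (hdeg i) j))
  rcases abs_cases r with ⟨he, _⟩ | ⟨he, _⟩
  · -- B < r
    have hBr : B < r := by rw [he] at habs; exact habs
    have : 0 < (1:ℝ) * (∑ i, lam i • f i).eval r := by
      apply combo_pos_of_sign hlam hsum
      intro i
      rw [one_mul, eq_prodX_rootVec (hmonic i) (hrr i) (hdeg i)]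
      apply prodX_pos
      intro j
      linarith [(key i j).2]
    rw [hmem.eq_zero] at this
    simp at this
  · -- r < -B
    have hBr : r < -B := by rw [he] at habs; linarith
    have : 0 < (-1:ℝ)^n * (∑ i, lam i • f i).eval r := by
      apply combo_pos_of_sign hlam hsum
      intro i
      rw [eq_prodX_rootVec (hmonic i) (hrr i) (hdeg i)]
      apply prodX_sign_neg
      intro j
      linarith [(key i j).1]
    rw [hmem.eq_zero] at this
    simp at this

/- ## Eventual positivity at ±∞ -/

open Filter Topology in
lemma exists_eval_pos_gt {F : Polynomial ℝ} (hF : F.Monic) (hn : 0 < F.natDegree) (b : ℝ) :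
    ∃ x, b < x ∧ 0 < F.eval x := by
  have hdeg : 0 < F.degree := by
    rw [degree_eq_natDegree hF.ne_zero]
    exact_mod_cast hn
  have ht := tendsto_atTop_of_leadingCoeff_nonneg F hdeg (by rw [hF.leadingCoeff]; norm_num)
  have h1 : ∀ᶠ x in atTop, 0 < F.eval x := ht.eventually_gt_atTop 0
  have h2 : ∀ᶠ x : ℝ in atTop, b < x := eventually_gt_atTop b
  obtain ⟨x, hx1, hx2⟩ := (h2.and h1).exists
  exact ⟨x, hx1, hx2⟩

open Filter Topology in
lemma exists_eval_sign_lt {F : Polynomial ℝ} (hF : F.Monic) (hn : 0 < F.natDegree) (b : ℝ) :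
    ∃ x, x < b ∧ 0 < (-1:ℝ) ^ F.natDegree * F.eval x := by
  set n := F.natDegree
  set G : Polynomial ℝ := C ((-1:ℝ)^n) * (F.comp (-X)) with hG
  have hnegX : (-X : Polynomial ℝ).natDegree = 1 := by simp
  have hcompdeg : (F.comp (-X)).natDegree = n := by
    rw [natDegree_comp, hnegX, mul_one]
  have hcomplc : (F.comp (-X)).leadingCoeff = (-1:ℝ)^n := by
    rw [leadingCoeff_comp (by rw [hnegX]; norm_num)]
    rw [hF.leadingCoeff, one_mul]
    have : (-X : Polynomial ℝ).leadingCoeff = -1 := by simp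
    rw [this]
  have hGne : F.comp (-X) ≠ 0 := by
    intro h
    rw [h] at hcompdeg
    simp at hcompdeg
    omega
  have hGdeg : G.natDegree = n := by
    rw [hG, natDegree_C_mul (by positivity <;> norm_num : ((-1:ℝ)^n) ≠ 0)]
    exact hcompdeg
  have hGlc : G.leadingCoeff = 1 := by
    rw [hG, leadingCoeff_mul, leadingCoeff_C, hcomplc]
    rw [← mul_pow]
    norm_num
  have hdeg : 0 < G.degree := by
    have : G ≠ 0 := by
      intro h; rw [h] at hGlc; simp at hGlc
    rw [degree_eq_natDegree this, hGdeg]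
    exact_mod_cast hn
  have ht := tendsto_atTop_of_leadingCoeff_nonneg G hdeg (by rw [hGlc]; norm_num)
  have h1 : ∀ᶠ x in atTop, 0 < G.eval x := ht.eventually_gt_atTop 0
  have h2 : ∀ᶠ x : ℝ in atTop, -b < x := eventually_gt_atTop (-b)
  obtain ⟨y, hy1, hy2⟩ := (h2.and h1).exists
  refine ⟨-y, by linarith, ?_⟩
  have : G.eval y = (-1:ℝ)^n * F.eval (-y) := by
    rw [hG]; simp [eval_comp]
  rwa [this] at hy2

/- ## n distinct roots imply real-rooted -/

lemma realRooted_of_distinct_roots {n : ℕ} {F : Polynomial ℝ} (hF : F.Monic)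
    (hFd : F.natDegree = n) (x : Fin n → ℝ) (hx : Function.Injective x)
    (hroot : ∀ i, F.IsRoot (x i)) : RealRooted F := by
  classical
  have himg : Finset.image x Finset.univ ⊆ F.roots.toFinset := by
    intro a ha
    obtain ⟨i, _, rfl⟩ := Finset.mem_image.1 ha
    rw [Multiset.mem_toFinset, mem_roots hF.ne_zero]
    exact hroot i
  have h1 : n ≤ F.roots.toFinset.card := by
    have := Finset.card_le_card himg
    rwa [Finset.card_image_of_injective _ hx, Finset.card_univ, Fintype.card_fin] at this
  have h2 : F.roots.toFinset.card ≤ Multiset.card F.roots := Multiset.toFinset_card_le _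
  have h3 : Multiset.card F.roots ≤ F.natDegree := F.card_roots'
  rw [RealRooted, hFd]
  omega

lemma opp_sign {c u v : ℝ} (hc : c ^ 2 = 1) (h1 : 0 < c * u) (h2 : 0 < -c * v) :
    u * v < 0 := by nlinarith

lemma exists_root_between {F : Polynomial ℝ} {l r : ℝ} (hlr : l < r)
    (hsign : F.eval l * F.eval r < 0) : ∃ x, l < x ∧ x < r ∧ F.IsRoot x := by
  have hc : ContinuousOn (fun y => F.eval y) (Set.uIcc l r) := (F.continuous_aeval).continuousOn
  rcases mul_neg_iff.1 hsign with ⟨h1, h2⟩ | ⟨h1, h2⟩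
  · -- F l > 0 > F r
    have h0 : (0:ℝ) ∈ Set.Ioo (F.eval r) (F.eval l) := ⟨h2, h1⟩
    have := intermediate_value_Ioo' (le_of_lt hlr) ((F.continuous_aeval).continuousOn) h0
    obtain ⟨x, hx, hfx⟩ := this
    exact ⟨x, hx.1, hx.2, hfx⟩
  · have h0 : (0:ℝ) ∈ Set.Ioo (F.eval l) (F.eval r) := ⟨h1, h2⟩
    have := intermediate_value_Ioo (le_of_lt hlr) ((F.continuous_aeval).continuousOn) h0
    obtain ⟨x, hx, hfx⟩ := this
    exact ⟨x, hx.1, hx.2, hfx⟩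

lemma realRooted_of_alternating {n : ℕ} (hn : 0 < n) {F : Polynomial ℝ} (hF : F.Monic)
    (hFd : F.natDegree = n) (α : Fin (n-1) → ℝ) (hα : StrictMono α)
    (hsign : ∀ m : Fin (n-1), 0 < (-1:ℝ) ^ (n - 1 - (m:ℕ)) * F.eval (α m)) :
    RealRooted F := by
  have hn' : 0 < F.natDegree := by omega
  have claim : ∀ i : Fin n, ∃ x, F.IsRoot x ∧
      (∀ h : (i:ℕ) < n - 1, x < α ⟨i, h⟩) ∧
      (∀ h : 0 < (i:ℕ), α ⟨(i:ℕ) - 1, by omega⟩ < x) := by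
    intro i
    by_cases hi1 : (i:ℕ) < n - 1
    · by_cases hi0 : 0 < (i:ℕ)
      · -- middle root in (α (i-1), α i)
        have hlt : α ⟨(i:ℕ) - 1, by omega⟩ < α ⟨i, hi1⟩ := hα (by simp [Fin.lt_def]; omega)
        have h1 := hsign ⟨(i:ℕ) - 1, by omega⟩
        have h2 := hsign ⟨i, hi1⟩
        simp only at h1 h2
        have hexp : n - 1 - ((i:ℕ) - 1) = (n - 1 - (i:ℕ)) + 1 := by omega
        rw [hexp, pow_succ] at h1
        have hc : ((-1:ℝ) ^ (n - 1 - (i:ℕ))) ^ 2 = 1 := by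
          rw [← pow_mul, mul_comm, pow_mul]; norm_num
        have h1' : 0 < -((-1:ℝ) ^ (n - 1 - (i:ℕ))) *
            F.eval (α ⟨(i:ℕ) - 1, by omega⟩) := by nlinarith [h1]
        have hprod : F.eval (α ⟨(i:ℕ) - 1, by omega⟩) * F.eval (α ⟨i, hi1⟩) < 0 := by
          have := opp_sign hc h2 h1'
          nlinarith [this]
        obtain ⟨x, hx1, hx2, hx3⟩ := exists_root_between hlt hprod
        exact ⟨x, hx3, fun h => hx2, fun h => hx1⟩
      · -- leftmost root, below α 0 (note n ≥ 2 here)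
        have h2 := hsign ⟨(i:ℕ), hi1⟩
        obtain ⟨a, ha1, ha2⟩ := exists_eval_sign_lt hF hn' (α ⟨(i:ℕ), hi1⟩)
        rw [hFd] at ha2
        have hi0' : (i:ℕ) = 0 := by omega
        have hexp : n = (n - 1 - (i:ℕ)) + 1 := by omega
        rw [hexp, pow_succ] at ha2
        have hc : ((-1:ℝ) ^ (n - 1 - (i:ℕ))) ^ 2 = 1 := by
          rw [← pow_mul, mul_comm, pow_mul]; norm_num
        have ha2' : 0 < -((-1:ℝ) ^ (n - 1 - (i:ℕ))) * F.eval a := by nlinarith [ha2]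
        have hprod : F.eval a * F.eval (α ⟨(i:ℕ), hi1⟩) < 0 := by
          have := opp_sign hc h2 ha2'
          nlinarith [this]
        obtain ⟨x, hx1, hx2, hx3⟩ := exists_root_between ha1 hprod
        exact ⟨x, hx3, fun h => hx2, fun h => by omega⟩
    · -- rightmost root (or the only root if n = 1)
      by_cases hn1 : n = 1
      · -- single root anywhere
        obtain ⟨b, hb1, hb2⟩ := exists_eval_pos_gt hF hn' 0
        obtain ⟨a, ha1, ha2⟩ := exists_eval_sign_lt hF hn' 0
        rw [hFd, hn1] at ha2
        simp only [pow_one] at ha2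
        have hprod : F.eval a * F.eval b < 0 := by nlinarith
        obtain ⟨x, hx1, hx2, hx3⟩ := exists_root_between (by linarith : a < b) hprod
        exact ⟨x, hx3, fun h => by omega, fun h => by omega⟩
      · -- n ≥ 2, root above α (n-2)
        have hlast : (n : ℕ) - 2 < n - 1 := by omega
        have h1 := hsign ⟨n - 2, hlast⟩
        have hexp : n - 1 - (n - 2) = 1 := by omega
        rw [hexp, pow_one] at h1
        obtain ⟨b, hb1, hb2⟩ := exists_eval_pos_gt hF hn' (α ⟨n - 2, hlast⟩)
        have hprod : F.eval (α ⟨n - 2, hlast⟩) * F.eval b < 0 := by nlinarith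
        obtain ⟨x, hx1, hx2, hx3⟩ := exists_root_between hb1 hprod
        have hieq : (i:ℕ) = n - 1 := by omega
        refine ⟨x, hx3, fun h => by omega, fun h => ?_⟩
        have : ((i:ℕ) - 1 : ℕ) = n - 2 := by omega
        have hcast : (⟨(i:ℕ) - 1, by omega⟩ : Fin (n-1)) = ⟨n - 2, hlast⟩ := by
          ext; simp [this]
        rw [hcast]
        exact hx1
  choose x hx using claim
  have hsm : ∀ i j : Fin n, (i:ℕ) < (j:ℕ) → x i < x j := by
    intro i j hij
    have hi1 : (i:ℕ) < n - 1 := by omega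
    have hj0 : 0 < (j:ℕ) := by omega
    have h1 : x i < α ⟨i, hi1⟩ := (hx i).2.1 hi1
    have h2 : α ⟨(j:ℕ) - 1, by omega⟩ < x j := (hx j).2.2 hj0
    have h3 : α ⟨i, hi1⟩ ≤ α ⟨(j:ℕ) - 1, by omega⟩ := by
      apply hα.monotone
      simp [Fin.le_def]; omega
    linarith
  have hinj : Function.Injective x := by
    intro i j hij
    by_contra hne
    rcases Ne.lt_or_gt (fun h : i = j => hne h) with h | h
    · have := hsm i j (by exact_mod_cast h)
      rw [hij] at this; exact lt_irrefl _ this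
    · have := hsm j i (by exact_mod_cast h)
      rw [hij] at this; exact lt_irrefl _ this
  exact realRooted_of_distinct_roots hF hFd x hinj fun i => (hx i).1

lemma prod_neg_pos {ι : Type*} {s : Finset ι} {f : ι → ℝ} (h : ∀ j ∈ s, f j < 0) :
    0 < (-1:ℝ) ^ s.card * ∏ j ∈ s, f j := by
  have key : ∏ j ∈ s, f j = (-1:ℝ) ^ s.card * ∏ j ∈ s, (-(f j)) := by
    rw [← Finset.prod_const, ← Finset.prod_mul_distrib]
    exact Finset.prod_congr rfl fun j _ => by ring
  rw [key, ← mul_assoc, ← mul_pow]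
  simp only [neg_mul_neg, one_mul, one_pow]
  exact Finset.prod_pos fun j hj => by linarith [h j hj]

lemma prodX_alt_sign {n : ℕ} {r : Fin n → ℝ} {y : ℝ} {m : ℕ} (hm : m < n)
    (hlow : ∀ j : Fin n, (j:ℕ) ≤ m → r j < y)
    (hhigh : ∀ j : Fin n, m < (j:ℕ) → y < r j) :
    0 < (-1:ℝ) ^ (n - 1 - m) * (prodX r).eval y := by
  classical
  rw [prodX_eval]
  rw [← Finset.prod_filter_mul_prod_filter_not Finset.univ (fun j : Fin n => j ≤ ⟨m, hm⟩)]
  have hfil1 : Finset.univ.filter (fun j : Fin n => j ≤ ⟨m, hm⟩) = Finset.Iic ⟨m, hm⟩ := by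
    ext j; simp [Finset.mem_Iic]
  have hfil2 : Finset.univ.filter (fun j : Fin n => ¬ j ≤ ⟨m, hm⟩) = Finset.Ioi ⟨m, hm⟩ := by
    ext j; simp [Finset.mem_Ioi, not_le]
  rw [hfil1, hfil2]
  have hcard : (Finset.Ioi (⟨m, hm⟩ : Fin n)).card = n - 1 - m := Fin.card_Ioi _
  have hpos1 : 0 < ∏ j ∈ Finset.Iic (⟨m, hm⟩ : Fin n), (y - r j) := by
    apply Finset.prod_pos
    intro j hj
    rw [Finset.mem_Iic] at hj
    exact sub_pos.2 (hlow j hj)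
  have hpos2 : 0 < (-1:ℝ) ^ (n - 1 - m) * ∏ j ∈ Finset.Ioi (⟨m, hm⟩ : Fin n), (y - r j) := by
    rw [← hcard]
    apply prod_neg_pos
    intro j hj
    rw [Finset.mem_Ioi] at hj
    exact sub_neg.2 (hhigh j hj)
  calc (0:ℝ) < ((-1:ℝ) ^ (n - 1 - m) * ∏ j ∈ Finset.Ioi (⟨m, hm⟩ : Fin n), (y - r j)) *
      ∏ j ∈ Finset.Iic (⟨m, hm⟩ : Fin n), (y - r j) := mul_pos hpos2 hpos1
    _ = (-1:ℝ) ^ (n - 1 - m) * ((∏ j ∈ Finset.Iic (⟨m, hm⟩ : Fin n), (y - r j)) *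
      ∏ j ∈ Finset.Ioi (⟨m, hm⟩ : Fin n), (y - r j)) := by ring

open Filter Topology in
/-- Forward direction: a common interlacing implies every convex combination is
real-rooted. -/
lemma forward_dir {n k : ℕ} (hn : 0 < n) {f : Fin k → Polynomial ℝ}
    (hmonic : ∀ i, (f i).Monic) (hdeg : ∀ i, (f i).natDegree = n)
    {g : Polynomial ℝ} (hint : ∀ i, Interlaces g (f i))
    (lam : Fin k → ℝ) (hlam : ∀ i, 0 ≤ lam i) (hsum : (∑ i, lam i) = 1) :
    RealRooted (∑ i, lam i • f i) := by
  classical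
  rcases Nat.eq_zero_or_pos k with hk | hk
  · subst hk
    simp at hsum
  -- basic data
  have hgn : g.natDegree = n - 1 := by
    have h := (hint ⟨0, hk⟩).2.2.1
    rw [hdeg] at h
    omega
  have hgrr : RealRooted g := (hint ⟨0, hk⟩).2.1
  have hfrr : ∀ i, RealRooted (f i) := fun i => (hint i).1
  set Av : Fin (n-1) → ℝ := rootVec (n-1) g with hAv
  set Bv : Fin k → Fin n → ℝ := fun i => rootVec n (f i) with hBv
  have hAmono : Monotone Av := rootVec_monotone hgrr hgn
  have hBmono : ∀ i, Monotone (Bv i) := fun i => rootVec_monotone (hfrr i) (hdeg i)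
  -- interlacing data in vector form
  have hBA : ∀ i, ∀ m : Fin (n-1), Bv i ⟨m, by omega⟩ ≤ Av m ∧
      Av m ≤ Bv i ⟨(m:ℕ)+1, by omega⟩ := by
    intro i m
    have := (hint i).2.2.2 m (by rw [hgn]; exact m.2)
    exact this
  -- perturbed root vectors
  set rv : Fin k → ℝ → Fin n → ℝ := fun i ε j => Bv i j + ((j:ℕ) + 1) * ε with hrv
  set Ft : ℝ → Polynomial ℝ := fun ε => ∑ i, lam i • prodX (rv i ε) with hFt
  set av : ℝ → Fin (n-1) → ℝ := fun ε m => Av m + ((m:ℕ) + 3/2) * ε with hav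
  have hFtmonic : ∀ ε, (Ft ε).Monic ∧ (Ft ε).natDegree = n := fun ε =>
    combo_monic (fun i => prodX_monic _) (fun i => prodX_natDegree _) hsum
  -- real-rootedness of perturbations
  have hFtrr : ∀ ε : ℝ, 0 < ε → RealRooted (Ft ε) := by
    intro ε hε
    apply realRooted_of_alternating hn (hFtmonic ε).1 (hFtmonic ε).2 (av ε)
    · intro m m' hmm'
      simp only [hav]
      have h1 : Av m ≤ Av m' := hAmono hmm'.le
      have h2 : ((m:ℕ) : ℝ) < ((m':ℕ) : ℝ) := by exact_mod_cast hmm'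
      nlinarith
    · intro m
      apply combo_pos_of_sign hlam hsum
      intro i
      apply prodX_alt_sign (by omega : (m:ℕ) < n)
      · intro j hj
        simp only [hrv, hav]
        have h1 : Bv i j ≤ Bv i ⟨m, by omega⟩ := (hBmono i) (by simp [Fin.le_def]; omega)
        have h2 : Bv i ⟨m, by omega⟩ ≤ Av m := (hBA i m).1
        have h3 : ((j:ℕ) : ℝ) ≤ ((m:ℕ) : ℝ) := by exact_mod_cast hj
        nlinarith
      · intro j hj
        simp only [hrv, hav]
        have h1 : Bv i ⟨(m:ℕ)+1, by omega⟩ ≤ Bv i j := (hBmono i) (by simp [Fin.le_def]; omega)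
        have h2 : Av m ≤ Bv i ⟨(m:ℕ)+1, by omega⟩ := (hBA i m).2
        have h3 : ((m:ℕ) : ℝ) + 1 ≤ ((j:ℕ) : ℝ) := by exact_mod_cast hj
        nlinarith
  -- uniform root bound
  set CB : ℝ := ∑ i, ∑ j, |Bv i j| with hCB
  have hCBle : ∀ i j, |Bv i j| ≤ CB := by
    intro i j
    have h1 : |Bv i j| ≤ ∑ j', |Bv i j'| :=
      Finset.single_le_sum (f := fun j' => |Bv i j'|) (fun j' _ => abs_nonneg _)
        (Finset.mem_univ j)
    have h2 : ∑ j', |Bv i j'| ≤ CB :=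
      Finset.single_le_sum (f := fun i => ∑ j', |Bv i j'|)
        (fun i' _ => Finset.sum_nonneg fun j' _ => abs_nonneg _) (Finset.mem_univ i)
    linarith
  set M : ℝ := CB + n + 1 with hM
  have hFtbound : ∀ ε : ℝ, 0 < ε → ε ≤ 1 → ∀ r ∈ (Ft ε).roots, |r| ≤ M := by
    intro ε hε hε1
    apply combo_roots_bound (fun i => prodX_monic _) (fun i => prodX_natDegree _)
      (fun i => prodX_realRooted _) hlam hsum
    intro i r hr
    rw [prodX_roots] at hr
    rw [Multiset.mem_coe, List.mem_ofFn] at hr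
    obtain ⟨j, rfl⟩ := hr
    have h1 := hCBle i j
    have h2 : ((j:ℕ) : ℝ) + 1 ≤ n := by
      have := j.2
      exact_mod_cast Nat.succ_le_of_lt this
    have habs := abs_le.1 h1
    rw [hrv]
    rw [abs_le]
    constructor <;> simp only [hM] <;> nlinarith
  -- the limit
  have hevF : ∀ x : ℝ, Tendsto (fun m : ℕ => (Ft (1/((m:ℝ)+1))).eval x) atTop
      (𝓝 ((∑ i, lam i • f i).eval x)) := by
    intro x
    have hεlim : Tendsto (fun m : ℕ => 1/((m:ℝ)+1)) atTop (𝓝 0) :=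
      tendsto_one_div_add_atTop_nhds_zero_nat
    have hgen : Tendsto (fun ε : ℝ => (Ft ε).eval x) (𝓝 0) (𝓝 ((∑ i, lam i • f i).eval x)) := by
      have heval : ∀ ε, (Ft ε).eval x = ∑ i, lam i * ∏ j, (x - rv i ε j) := by
        intro ε
        rw [hFt, combo_eval]
        exact Finset.sum_congr rfl fun i _ => by rw [prodX_eval]
      have heval0 : (∑ i, lam i • f i).eval x = ∑ i, lam i * ∏ j, (x - Bv i j) := by
        rw [combo_eval]
        refine Finset.sum_congr rfl fun i _ => ?_
        rw [eq_prodX_rootVec (hmonic i) (hfrr i) (hdeg i), prodX_eval]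
      rw [heval0]
      simp only [heval]
      apply tendsto_finset_sum
      intro i _
      apply Tendsto.const_mul
      apply tendsto_finset_prod
      intro j _
      simp only [hrv]
      have hc : Continuous (fun ε : ℝ => x - (Bv i j + (((j:ℕ):ℝ) + 1) * ε)) :=
        continuous_const.sub (continuous_const.add (continuous_const.mul continuous_id))
      have := hc.tendsto 0
      simpa using this
    exact hgen.comp hεlim
  have hbnd : ∀ᶠ m : ℕ in atTop, (Ft (1/((m:ℝ)+1))).Monic ∧
      (Ft (1/((m:ℝ)+1))).natDegree = n ∧ RealRooted (Ft (1/((m:ℝ)+1))) ∧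
      ∀ r ∈ (Ft (1/((m:ℝ)+1))).roots, |r| ≤ M := by
    apply Filter.Eventually.of_forall
    intro m
    have hε : 0 < 1/((m:ℝ)+1) := by positivity
    have hε1 : 1/((m:ℝ)+1) ≤ 1 := by
      rw [div_le_one (by positivity)]
      simp
    exact ⟨(hFtmonic _).1, (hFtmonic _).2, hFtrr _ hε, hFtbound _ hε hε1⟩
  exact (core_limit (combo_monic hmonic hdeg hsum).1 (combo_monic hmonic hdeg hsum).2
    (fun m => Ft (1/((m:ℝ)+1))) hbnd hevF).1

/- ## Helpers for the backward direction -/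

lemma two_le_count {l : List ℝ} {c : ℝ} {i j : ℕ} (hij : i < j) (hj : j < l.length)
    (hi : l.getD i 0 = c) (hjc : l.getD j 0 = c) : 2 ≤ l.count c := by
  have hil : i < l.length := lt_trans hij hj
  rw [List.getD_eq_getElem _ _ hil] at hi
  rw [List.getD_eq_getElem _ _ hj] at hjc
  have h1 : c ∈ l.take j := by
    rw [← hi]
    have hlen : i < (l.take j).length := by
      rw [List.length_take]
      omega
    have : (l.take j)[i] = l[i] := List.getElem_take
    rw [← this]
    exact List.getElem_mem hlen
  have h2 : c ∈ l.drop j := by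
    rw [← hjc]
    have hlen : 0 < (l.drop j).length := by
      rw [List.length_drop]
      omega
    have : (l.drop j)[0] = l[j + 0] := List.getElem_drop ..
    simp only [Nat.add_zero] at this
    rw [← this]
    exact List.getElem_mem hlen
  have := List.take_append_drop j l
  calc (2:ℕ) = 1 + 1 := rfl
    _ ≤ (l.take j).count c + (l.drop j).count c := by
        have c1 : 1 ≤ (l.take j).count c := List.count_pos_iff.2 h1
        have c2 : 1 ≤ (l.drop j).count c := List.count_pos_iff.2 h2
        omega
    _ = ((l.take j) ++ (l.drop j)).count c := List.count_append.symm
    _ = l.count c := by rw [List.take_append_drop]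

lemma deriv_eval_zero {p : Polynomial ℝ} {c : ℝ} (h : (X - C c)^2 ∣ p) :
    (derivative p).eval c = 0 := by
  obtain ⟨w, rfl⟩ := h
  simp [derivative_mul, derivative_pow]

lemma double_root_of_count {p : Polynomial ℝ} (hp : p ≠ 0) {c : ℝ}
    (h : 2 ≤ p.roots.count c) : (X - C c)^2 ∣ p := by
  classical
  have hmult : 2 ≤ rootMultiplicity c p := by rwa [count_roots] at h
  exact dvd_trans (pow_dvd_pow _ hmult) (pow_rootMultiplicity_dvd p c)

/-- The Wronskian-vanishing argument: if `f p * (f q)' = (f p)' * f q` with both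
monic of the same degree `n ≥ 1`, then `f p = f q`. -/
lemma eq_of_wronskian_zero {n : ℕ} (hn : 0 < n) {P Q : Polynomial ℝ}
    (hPm : P.Monic) (hPd : P.natDegree = n) (hQm : Q.Monic) (hQd : Q.natDegree = n)
    (hW : P * derivative Q - derivative P * Q = 0) : P = Q := by
  by_contra hne
  obtain ⟨m, rfl⟩ : ∃ m, n = m + 1 := ⟨n - 1, by omega⟩
  set D : Polynomial ℝ := Q - P with hD
  have hDne : D ≠ 0 := sub_ne_zero.2 fun h => hne h.symm
  have hPcoeff : P.coeff (m+1) = 1 := by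
    have := hPm.leadingCoeff
    rwa [leadingCoeff, hPd] at this
  have hQcoeff : Q.coeff (m+1) = 1 := by
    have := hQm.leadingCoeff
    rwa [leadingCoeff, hQd] at this
  have hcP' : (derivative P).coeff m = (m:ℝ) + 1 := by
    rw [coeff_derivative, hPcoeff]
    push_cast
    ring
  have hP'ne : derivative P ≠ 0 := by
    intro h
    rw [h, coeff_zero] at hcP'
    have : ((m:ℝ) + 1) ≠ 0 := by positivity
    exact this hcP'.symm
  have hkey : P * derivative D = derivative P * D := by
    rw [hD, derivative_sub]
    linear_combination hW
  rcases Nat.eq_zero_or_pos D.natDegree with hd0 | hd1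
  · have hDC : D = C (D.coeff 0) := eq_C_of_natDegree_eq_zero hd0
    have hD' : derivative D = 0 := by rw [hDC]; simp
    rw [hD', mul_zero] at hkey
    exact (mul_ne_zero hP'ne hDne) hkey.symm
  · obtain ⟨e, hdd⟩ : ∃ e, D.natDegree = e + 1 := ⟨D.natDegree - 1, by omega⟩
    have hlcD : D.leadingCoeff ≠ 0 := leadingCoeff_ne_zero.2 hDne
    have hcD' : (derivative D).coeff e = D.leadingCoeff * ((e:ℝ) + 1) := by
      rw [coeff_derivative, leadingCoeff, hdd]
    have hD'ne : derivative D ≠ 0 := by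
      intro h
      rw [h, coeff_zero] at hcD'
      have h2 : D.leadingCoeff * ((e:ℝ) + 1) ≠ 0 := by
        apply mul_ne_zero hlcD
        positivity
      exact h2 hcD'.symm
    -- natDegrees of derivatives
    have hdD'le : (derivative D).natDegree ≤ e := by
      have := Polynomial.natDegree_derivative_le D
      omega
    have hdD' : (derivative D).natDegree = e := by
      refine le_antisymm hdD'le (le_natDegree_of_ne_zero ?_)
      rw [hcD']
      apply mul_ne_zero hlcD
      positivity
    have hlcD' : (derivative D).leadingCoeff = D.leadingCoeff * ((e:ℝ) + 1) := by
      rw [leadingCoeff, hdD', hcD']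
    have hdP'le : (derivative P).natDegree ≤ m := by
      have := Polynomial.natDegree_derivative_le P
      omega
    have hdP' : (derivative P).natDegree = m := by
      refine le_antisymm hdP'le (le_natDegree_of_ne_zero ?_)
      rw [hcP']
      positivity
    have hlcP' : (derivative P).leadingCoeff = (m:ℝ) + 1 := by
      rw [leadingCoeff, hdP', hcP']
    -- compare leading coefficients in hkey
    have hlc : P.leadingCoeff * (derivative D).leadingCoeff =
        (derivative P).leadingCoeff * D.leadingCoeff := by
      rw [← leadingCoeff_mul, ← leadingCoeff_mul, hkey]
    rw [hPm.leadingCoeff, one_mul, hlcD', hlcP'] at hlc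
    have hde : (e:ℝ) + 1 = (m:ℝ) + 1 := by
      have h2 : D.leadingCoeff * ((e:ℝ) + 1) - D.leadingCoeff * ((m:ℝ)+1) = 0 := by
        rw [hlc]; ring
      have h3 : D.leadingCoeff * (((e:ℝ) + 1) - ((m:ℝ)+1)) = 0 := by
        linear_combination h2
      rcases mul_eq_zero.1 h3 with h | h
      · exact absurd h hlcD
      · linarith [sub_eq_zero.1 h]
    have hem : e = m := by exact_mod_cast (by linarith [hde] : (e:ℝ) = m)
    -- but D has degree < m + 1
    have hDle : D.natDegree ≤ m + 1 := by
      rw [hD]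
      apply le_trans (natDegree_sub_le _ _)
      omega
    have hcoeffD : D.coeff (m+1) = 0 := by
      rw [hD, coeff_sub, hPcoeff, hQcoeff, sub_self]
    have : D.leadingCoeff = 0 := by
      rw [leadingCoeff, hdd, hem, hcoeffD]
    exact hlcD this

/- ## Backward direction -/

lemma single_realRooted {k : ℕ} {f : Fin k → Polynomial ℝ}
    (hrr : ∀ lam : Fin k → ℝ, (∀ i, 0 ≤ lam i) → (∑ i, lam i) = 1 →
      RealRooted (∑ i, lam i • f i)) (i : Fin k) : RealRooted (f i) := by
  classical
  have h := hrr (fun j => if j = i then 1 else 0) (fun j => by positivity)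
    (by simp)
  simpa [ite_smul] using h

lemma roots_abs_le_CB {n k : ℕ} {f : Fin k → Polynomial ℝ}
    (hrr : ∀ i, RealRooted (f i)) (hdeg : ∀ i, (f i).natDegree = n) :
    ∀ i, ∀ r ∈ (f i).roots, |r| ≤ ∑ i', ∑ jj : Fin n, |rootVec n (f i') jj| := by
  intro i r hr
  rw [← coe_sortedRoots, Multiset.mem_coe] at hr
  obtain ⟨m, hm, hmr⟩ := List.mem_iff_getElem.1 hr
  have hlen : (sortedRoots (f i)).length = n := by
    rw [sortedRoots_length _ (hrr i), hdeg i]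
  have hmn : m < n := by omega
  have hrv : r = rootVec n (f i) ⟨m, hmn⟩ := by
    rw [rootVec, ← hmr, List.getD_eq_getElem _ _ hm]
  rw [hrv]
  have h1 : |rootVec n (f i) ⟨m, hmn⟩| ≤ ∑ jj : Fin n, |rootVec n (f i) jj| :=
    Finset.single_le_sum (f := fun jj => |rootVec n (f i) jj|)
      (fun jj _ => abs_nonneg _) (Finset.mem_univ _)
  have h2 : ∑ jj : Fin n, |rootVec n (f i) jj| ≤ ∑ i', ∑ jj : Fin n, |rootVec n (f i') jj| :=
    Finset.single_le_sum (f := fun i' => ∑ jj : Fin n, |rootVec n (f i') jj|)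
      (fun i' _ => Finset.sum_nonneg fun jj _ => abs_nonneg _) (Finset.mem_univ _)
  linarith

lemma pair_gap {n k : ℕ} (hn : 0 < n) {f : Fin k → Polynomial ℝ}
    (hmonic : ∀ i, (f i).Monic) (hdeg : ∀ i, (f i).natDegree = n)
    (hrr : ∀ lam : Fin k → ℝ, (∀ i, 0 ≤ lam i) → (∑ i, lam i) = 1 →
      RealRooted (∑ i, lam i • f i))
    (p q : Fin k) (j : ℕ) (hj : j + 1 < n) :
    rootVec n (f p) ⟨j, by omega⟩ ≤ rootVec n (f q) ⟨j + 1, hj⟩ := by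
  classical
  have hfr : ∀ i, RealRooted (f i) := single_realRooted hrr
  by_contra hcon
  push_neg at hcon
  set a : ℝ := rootVec n (f q) ⟨j + 1, hj⟩ with ha
  set b : ℝ := rootVec n (f p) ⟨j, by omega⟩ with hb
  have hab : a < b := hcon
  have hpq : p ≠ q := by
    intro h
    subst h
    have := rootVec_monotone (hfr p) (hdeg p)
      (show (⟨j, by omega⟩ : Fin n) ≤ ⟨j + 1, hj⟩ by simp [Fin.le_def])
    rw [← ha, ← hb] at this
    exact absurd this (not_le.2 hab)
  -- the segment of polynomials
  set h : ℝ → Polynomial ℝ := fun t => (1 - t) • f p + t • f q with hh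
  have hcombo : ∀ t : ℝ, h t = ∑ i, ((if i = p then 1 - t else 0) +
      (if i = q then t else 0)) • f i := by
    intro t
    simp only [add_smul, Finset.sum_add_distrib, ite_smul, zero_smul,
      Finset.sum_ite_eq', Finset.mem_univ, if_true, hh]
  have hlamsum : ∀ t : ℝ, (∑ i, ((if i = p then 1 - t else 0) +
      (if i = q then t else 0))) = 1 := by
    intro t
    rw [Finset.sum_add_distrib]
    simp only [Finset.sum_ite_eq', Finset.mem_univ, if_true]
    ring
  have hlamnn : ∀ t ∈ Set.Icc (0:ℝ) 1, ∀ i, 0 ≤ ((if i = p then 1 - t else 0) +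
      (if i = q then t else 0)) := by
    intro t ht i
    rcases ht with ⟨h0, h1⟩
    have : (0:ℝ) ≤ 1 - t := by linarith
    positivity
  have hhm : ∀ t : ℝ, (h t).Monic ∧ (h t).natDegree = n := by
    intro t
    rw [hcombo t]
    exact combo_monic hmonic hdeg (hlamsum t)
  have hhrr : ∀ t ∈ Set.Icc (0:ℝ) 1, RealRooted (h t) := by
    intro t ht
    rw [hcombo t]
    exact hrr _ (hlamnn t ht) (hlamsum t)
  set CB : ℝ := ∑ i', ∑ jj : Fin n, |rootVec n (f i') jj| with hCB
  have hhbound : ∀ t ∈ Set.Icc (0:ℝ) 1, ∀ r ∈ (h t).roots, |r| ≤ CB := by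
    intro t ht
    rw [hcombo t]
    exact combo_roots_bound hmonic hdeg hfr (hlamnn t ht) (hlamsum t)
      (roots_abs_le_CB hfr hdeg)
  have heval : ∀ t x : ℝ, (h t).eval x = (1 - t) * (f p).eval x + t * (f q).eval x := by
    intro t x
    rw [hh]
    simp [Polynomial.smul_eq_C_mul]
  -- continuity of the sorted-roots map on [0,1]
  set S : ℝ → Fin n → ℝ := fun t => rootVec n (h t) with hS
  have hStend : ∀ t0 ∈ Set.Icc (0:ℝ) 1,
      Filter.Tendsto S (nhdsWithin t0 (Set.Icc 0 1)) (nhds (S t0)) := by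
    intro t0 ht0
    rw [Filter.tendsto_iff_seq_tendsto]
    intro u hu
    rw [tendsto_nhdsWithin_iff] at hu
    obtain ⟨hu1, hu2⟩ := hu
    refine (core_limit (M := CB) (hhm t0).1 (hhm t0).2 (fun m => h (u m)) ?_ ?_).2
    · filter_upwards [hu2] with m hm
      exact ⟨(hhm _).1, (hhm _).2, hhrr _ hm, hhbound _ hm⟩
    · intro x
      have hc : Continuous (fun t : ℝ => (1 - t) * (f p).eval x + t * (f q).eval x) := by
        apply Continuous.add
        · exact (continuous_const.sub continuous_id).mul continuous_const
        · exact continuous_id.mul continuous_const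
      have hT := (hc.tendsto t0).comp hu1
      rw [heval t0 x]
      exact hT.congr fun m => (heval (u m) x).symm
  have hSj : ∀ j' : Fin n, ContinuousOn (fun t => S t j') (Set.Icc 0 1) := by
    intro j' t0 ht0
    exact ((continuous_apply j').tendsto _).comp (hStend t0 ht0)
  -- endpoint values
  have hS0 : S 0 = rootVec n (f p) := by
    have h0 : h 0 = f p := by rw [hh]; simp
    show rootVec n (h 0) = rootVec n (f p)
    rw [h0]
  have hS1 : S 1 = rootVec n (f q) := by
    have h1 : h 1 = f q := by rw [hh]; simp
    show rootVec n (h 1) = rootVec n (f q)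
    rw [h1]
  set jlow : Fin n := ⟨j, by omega⟩ with hjlow
  set jhigh : Fin n := ⟨j + 1, hj⟩ with hjhigh
  -- the Wronskian polynomial vanishes on an infinite set
  set W : Polynomial ℝ := f p * derivative (f q) - derivative (f p) * f q with hW
  have hWzero : ∀ c ∈ Set.Ioo a b \
      ({x | (f p).IsRoot x} ∪ {x | (f q).IsRoot x}), W.eval c = 0 := by
    intro c hc
    obtain ⟨⟨hca, hcb⟩, hcno⟩ := hc
    have hcp : (f p).eval c ≠ 0 := fun hz => hcno (Or.inl hz)
    have hcq : (f q).eval c ≠ 0 := fun hz => hcno (Or.inr hz)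
    -- IVT for the two root functions
    have hmono01 : ∀ t ∈ Set.Icc (0:ℝ) 1, S t jlow ≤ S t jhigh := fun t ht =>
        rootVec_monotone (hhrr t ht) (hhm t).2 (by simp [hjlow, hjhigh, Fin.le_def])
    have hq_mono : rootVec n (f q) jlow ≤ a :=
      rootVec_monotone (hfr q) (hdeg q) (by simp [hjlow, Fin.le_def])
    have hp_mono : b ≤ rootVec n (f p) jhigh :=
      rootVec_monotone (hfr p) (hdeg p) (by simp [hjlow, hjhigh, Fin.le_def])
    have h0mem : (0:ℝ) ∈ Set.Icc (0:ℝ) 1 := by norm_num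
    have h1mem : (1:ℝ) ∈ Set.Icc (0:ℝ) 1 := by norm_num
    -- τ1 : S τ1 jlow = c
    have hiv1 : c ∈ Set.Icc ((fun t => S t jlow) 1) ((fun t => S t jlow) 0) := by
      simp only [hS0, hS1]
      constructor
      · calc rootVec n (f q) jlow ≤ a := hq_mono
          _ ≤ c := le_of_lt hca
      · exact le_of_lt hcb
    obtain ⟨τ1, hτ1mem, hτ1⟩ := intermediate_value_Icc' (by norm_num : (0:ℝ) ≤ 1)
      (hSj jlow) hiv1
    -- τ2 : S τ2 jhigh = c
    have hiv2 : c ∈ Set.Icc ((fun t => S t jhigh) 1) ((fun t => S t jhigh) 0) := by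
      simp only [hS0, hS1]
      constructor
      · exact le_of_lt hca
      · calc c ≤ b := le_of_lt hcb
          _ ≤ rootVec n (f p) jhigh := hp_mono
    obtain ⟨τ2, hτ2mem, hτ2⟩ := intermediate_value_Icc' (by norm_num : (0:ℝ) ≤ 1)
      (hSj jhigh) hiv2
    -- both are roots : linear equations
    have hroot1 : (h τ1).eval c = 0 := by
      have : c ∈ (h τ1).roots := by
        rw [← hτ1]
        exact rootVec_mem_roots (hhrr τ1 hτ1mem) (hhm τ1).2 jlow
      exact ((mem_roots (hhm τ1).1.ne_zero).1 this)
    have hroot2 : (h τ2).eval c = 0 := by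
      have : c ∈ (h τ2).roots := by
        rw [← hτ2]
        exact rootVec_mem_roots (hhrr τ2 hτ2mem) (hhm τ2).2 jhigh
      exact ((mem_roots (hhm τ2).1.ne_zero).1 this)
    rw [heval] at hroot1 hroot2
    set A := (f p).eval c
    set B := (f q).eval c
    have hAB : A ≠ B := by
      intro hABeq
      rw [← hABeq] at hroot1
      have : A = 0 := by linarith [hroot1]
      exact hcp this
    have hτeq : τ1 = τ2 := by
      have hdiff : (τ1 - τ2) * (B - A) = 0 := by linear_combination hroot1 - hroot2
      rcases mul_eq_zero.1 hdiff with hz | hz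
      · linarith [sub_eq_zero.1 hz]
      · exact absurd (sub_eq_zero.1 hz).symm hAB
    replace hτ1 : S τ1 jlow = c := hτ1
    replace hτ2 : S τ2 jhigh = c := hτ2
    -- τ1 strictly inside (0,1)
    have hτ1ne0 : τ1 ≠ 0 := by
      intro hz
      rw [hz, hS0] at hτ1
      exact (ne_of_gt hcb) hτ1
    have hτ1ne1 : τ1 ≠ 1 := by
      intro hz
      rw [hz, hS1] at hτ1
      have : rootVec n (f q) jlow ≤ a := hq_mono
      rw [hτ1] at this
      linarith
    -- double root at c
    have hdr : (X - C c)^2 ∣ h τ1 := by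
      apply double_root_of_count (hhm τ1).1.ne_zero
      rw [← coe_sortedRoots, Multiset.coe_count]
      have hlen : (sortedRoots (h τ1)).length = n := by
        rw [sortedRoots_length _ (hhrr τ1 hτ1mem), (hhm τ1).2]
      apply two_le_count (i := j) (j := j + 1) (by omega) (by omega)
      · exact hτ1
      · rw [hτeq]; exact hτ2
    have hd1 : (derivative (h τ1)).eval c = 0 := deriv_eval_zero hdr
    have hdh : derivative (h τ1) = (1 - τ1) • derivative (f p) + τ1 • derivative (f q) := by
      rw [hh]
      simp
    rw [hdh] at hd1
    have hd1' : (1 - τ1) * (derivative (f p)).eval c + τ1 * (derivative (f q)).eval c = 0 := by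
      simpa [Polynomial.smul_eq_C_mul] using hd1
    -- conclude Wronskian vanishes
    have hτ10 : 0 ≤ τ1 := hτ1mem.1
    have hτ11 : τ1 ≤ 1 := hτ1mem.2
    set A' := (derivative (f p)).eval c
    set B' := (derivative (f q)).eval c
    have hWc : τ1 * (1 - τ1) * (A * B' - A' * B) = 0 := by
      have e1 : (1 - τ1) * A + τ1 * B = 0 := hroot1
      linear_combination (τ1 * B') * e1 - (τ1 * B) * hd1'
    have hτ1pos : 0 < τ1 := lt_of_le_of_ne hτ10 (Ne.symm hτ1ne0)
    have hτ1lt : τ1 < 1 := lt_of_le_of_ne hτ11 hτ1ne1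
    have hABW : A * B' - A' * B = 0 := by
      rcases mul_eq_zero.1 hWc with hz | hz
      · rcases mul_eq_zero.1 hz with hz2 | hz2
        · exact absurd hz2 (ne_of_gt hτ1pos)
        · exfalso; linarith [hz2]
      · exact hz
    rw [hW]
    simp only [eval_sub, eval_mul]
    exact hABW
  -- W is the zero polynomial
  have hWpoly : W = 0 := by
    apply eq_zero_of_infinite_isRoot
    apply Set.Infinite.mono (s := Set.Ioo a b \ ({x | (f p).IsRoot x} ∪ {x | (f q).IsRoot x}))
    · intro c hc
      exact hWzero c hc
    · apply Set.Infinite.diff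
      · exact Set.Ioo_infinite hab
      · exact (finite_setOf_isRoot (hmonic p).ne_zero).union
          (finite_setOf_isRoot (hmonic q).ne_zero)
  have hfeq : f p = f q :=
    eq_of_wronskian_zero hn (hmonic p) (hdeg p) (hmonic q) (hdeg q) hWpoly
  -- contradiction
  have : b = rootVec n (f q) jlow := by rw [hb, hfeq]
  have h2 : rootVec n (f q) jlow ≤ a :=
    rootVec_monotone (hfr q) (hdeg q) (by simp [hjlow, hjhigh, Fin.le_def])
  rw [← this] at h2
  linarith

lemma backward_dir {n k : ℕ} (hn : 0 < n) {f : Fin k → Polynomial ℝ}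
    (hmonic : ∀ i, (f i).Monic) (hdeg : ∀ i, (f i).natDegree = n)
    (hrr : ∀ lam : Fin k → ℝ, (∀ i, 0 ≤ lam i) → (∑ i, lam i) = 1 →
      RealRooted (∑ i, lam i • f i)) :
    ∃ g : Polynomial ℝ, g.Monic ∧ ∀ i, Interlaces g (f i) := by
  classical
  rcases Nat.eq_zero_or_pos k with hk | hk
  · subst hk
    exact ⟨1, monic_one, fun i => i.elim0⟩
  have : Nonempty (Fin k) := ⟨⟨0, hk⟩⟩
  have hne : (Finset.univ : Finset (Fin k)).Nonempty := Finset.univ_nonempty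
  have hfr : ∀ i, RealRooted (f i) := single_realRooted hrr
  set α : Fin (n-1) → ℝ := fun m =>
    Finset.univ.sup' hne (fun i => rootVec n (f i) ⟨m, by omega⟩) with hα
  have hαmono : Monotone α := by
    intro m m' hmm'
    apply Finset.sup'_le
    intro i _
    calc rootVec n (f i) ⟨m, by omega⟩ ≤ rootVec n (f i) ⟨m', by omega⟩ :=
          rootVec_monotone (hfr i) (hdeg i) (Fin.mk_le_mk.mpr hmm')
      _ ≤ α m' := Finset.le_sup' (fun i' => rootVec n (f i') ⟨m', by omega⟩)
          (Finset.mem_univ i)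
  set g : Polynomial ℝ := prodX α with hg
  have hgd : g.natDegree = n - 1 := prodX_natDegree α
  have hgsorted : sortedRoots g = List.ofFn α := prodX_sortedRoots hαmono
  refine ⟨g, prodX_monic α, fun i => ?_⟩
  refine ⟨hfr i, prodX_realRooted α, by rw [hgd, hdeg i]; omega, ?_⟩
  intro m hm
  rw [hgd] at hm
  have hglen : (List.ofFn α).length = n - 1 := by simp
  have hgetD : (sortedRoots g).getD m 0 = α ⟨m, hm⟩ := by
    rw [hgsorted, List.getD_eq_getElem _ _ (by rw [hglen]; exact hm), List.getElem_ofFn]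
  constructor
  · rw [hgetD]
    exact Finset.le_sup' (fun i' => rootVec n (f i') ⟨m, by omega⟩) (Finset.mem_univ i)
  · rw [hgetD]
    apply Finset.sup'_le
    intro i' _
    exact pair_gap hn hmonic hdeg hrr i' i m (by omega)

/-- Monic real polynomials of a common degree have a common interlacing iff every
convex combination of them is real-rooted. -/
theorem commonInterlacing_iff_convex_realRooted (n k : ℕ) (hn : 0 < n)
    (f : Fin k → Polynomial ℝ) (hmonic : ∀ i, (f i).Monic)
    (hdeg : ∀ i, (f i).natDegree = n) :
    (∃ g : Polynomial ℝ, g.Monic ∧ ∀ i, Interlaces g (f i)) ↔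
      ∀ lam : Fin k → ℝ, (∀ i, 0 ≤ lam i) → (∑ i, lam i) = 1 →
        RealRooted (∑ i, lam i • f i) := by

  constructor
  · rintro ⟨g, hgm, hgint⟩ lam hlam hsum
    exact forward_dir hn hmonic hdeg hgint lam hlam hsum
  · intro hrr
    exact backward_dir hn hmonic hdeg hrr
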